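/- (No-regret regularized policy gradient.) Fix a finite set $\mathcal{Y}$, a fully-supported reference distribution $\nu\in\Delta(\mathcal{Y})$, loss functions $l^1,\dots,l^T:\mathcal{Y}\to[0,B]$, and parameters $\eta,\lambda>0$. Initialize $p^1=\nu$ and iterate $p^{t+1}=\arg\min_{p\in\Delta(\mathcal{Y})}\big[-\langle l^t,p\rangle + \lambda\chi^2(p,\nu)+\tfrac1\eta D(p,p^t)\big]$, where $D$ is the Bregman divergence of $\chi^2(\cdot,\nu)$. Then for every $\mu\in\Delta(\mathcal{Y})$: $\sum_{t=1}^T\langle l^t,\mu-p^t\rangle + \lambda\sum_{t=1}^{T+1}\chi^2(p^t,\nu)\le (T\lambda+\tfrac1\eta)\chi^2(\mu,\nu)+\tfrac{\eta T B^2}{4}$. -/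

import Mathlib

/-- If `s*g + s²*A ≥ 0` for all `s ∈ (0,1]` and `A ≥ 0`, then `g ≥ 0`. -/
lemma quad_min_aux {g A : ℝ} (hA : 0 ≤ A)
    (h : ∀ s : ℝ, 0 < s → s ≤ 1 → 0 ≤ s * g + s ^ 2 * A) : 0 ≤ g := by
  by_contra hg
  push_neg at hg
  set s : ℝ := min 1 (-g / (2 * (A + 1))) with hs
  have hden : (0:ℝ) < 2 * (A + 1) := by linarith
  have hs0 : 0 < s := lt_min one_pos (div_pos (by linarith) hden)
  have hs1 : s ≤ 1 := min_le_left _ _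
  have h2 : s ≤ -g / (2 * (A + 1)) := min_le_right _ _
  have h3 : s * (2 * (A + 1)) ≤ -g := by
    rw [← le_div_iff₀ hden]; exact h2
  have h4 := h s hs0 hs1
  nlinarith [mul_pos hs0 hs0, mul_le_mul_of_nonneg_left h3 hs0.le]

lemma expand_pt_aux (v u w d s : ℝ) :
    (u + s * d - w) ^ 2 / v
      = (u - w) ^ 2 / v + s * (2 * (u - w) * d / v) + s ^ 2 * (d ^ 2 / v) := by
  rcases eq_or_ne v 0 with h | h
  · simp [h]
  · field_simp; ring

lemma amgm_pt_aux (η v li B a : ℝ) (hη : 0 < η) (hv : 0 < v)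
    (hl0 : 0 ≤ li) (hlB : li ≤ B) :
    li * a ≤ (1 / η) * (a ^ 2 / v) + η * B ^ 2 / 4 * v := by
  have hc : (1 / η) * (a ^ 2 / v) = a ^ 2 / (η * v) := by field_simp
  rw [hc]
  set c : ℝ := a ^ 2 / (η * v) with hcc
  have hceq : a ^ 2 = c * (η * v) := by rw [hcc]; field_simp
  have hl2 : li ^ 2 ≤ B ^ 2 := by nlinarith
  have h5 : (η * v) ^ 2 * li ^ 2 ≤ (η * v) ^ 2 * B ^ 2 :=
    mul_le_mul_of_nonneg_left hl2 (sq_nonneg _)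
  have hmain : η * v * (li * a) ≤ η * v * (c + η * B ^ 2 / 4 * v) := by
    nlinarith [sq_nonneg (a - η * v * li / 2), h5]
  exact (mul_le_mul_iff_right₀ (mul_pos hη hv)).mp hmain

set_option maxHeartbeats 1000000 in
/-- No-regret guarantee for chi-squared–regularized policy gradient (mirror descent):
for iterates `p¹ = ν` and
`p^{t+1} = argmin_{p ∈ Δ(Y)} [-⟨lᵗ,p⟩ + λ χ²(p,ν) + (1/η) D(p,pᵗ)]`,
every comparator `μ ∈ Δ(Y)` satisfies
`∑_{t=1}^T ⟨lᵗ, μ - pᵗ⟩ + λ ∑_{t=1}^{T+1} χ²(pᵗ,ν) ≤ (Tλ + 1/η) χ²(μ,ν) + ηTB²/4`. -/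
theorem no_regret_regularized_policy_gradient
    {Y : Type*} [Fintype Y]
    (ν : Y → ℝ) (hν : ∀ y, 0 < ν y) (hνsum : ∑ y, ν y = 1)
    (T : ℕ) (B η lam : ℝ) (hB : 0 ≤ B) (hη : 0 < η) (hlam : 0 < lam)
    (l : ℕ → Y → ℝ) (hl : ∀ t ∈ Finset.Icc 1 T, ∀ y, 0 ≤ l t y ∧ l t y ≤ B)
    (p : ℕ → Y → ℝ)
    (hp1 : p 1 = ν)
    (hsimplex : ∀ t ∈ Finset.Icc 1 (T + 1), (∀ y, 0 ≤ p t y) ∧ ∑ y, p t y = 1)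
    (hupdate : ∀ t ∈ Finset.Icc 1 T, ∀ q : Y → ℝ, (∀ y, 0 ≤ q y) → (∑ y, q y = 1) →
      (-∑ y, l t y * p (t + 1) y) + lam * ∑ y, (p (t + 1) y - ν y) ^ 2 / ν y
          + (1 / η) * ∑ y, (p (t + 1) y - p t y) ^ 2 / ν y
        ≤ (-∑ y, l t y * q y) + lam * ∑ y, (q y - ν y) ^ 2 / ν y
          + (1 / η) * ∑ y, (q y - p t y) ^ 2 / ν y)
    (μ : Y → ℝ) (hμ : ∀ y, 0 ≤ μ y) (hμsum : ∑ y, μ y = 1) :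
    (∑ t ∈ Finset.Icc 1 T, ∑ y, l t y * (μ y - p t y))
        + lam * ∑ t ∈ Finset.Icc 1 (T + 1), ∑ y, (p t y - ν y) ^ 2 / ν y
      ≤ ((T : ℝ) * lam + 1 / η) * (∑ y, (μ y - ν y) ^ 2 / ν y)
        + η * T * B ^ 2 / 4 := by
  classical
  -- Bregman divergence
  set D : (Y → ℝ) → (Y → ℝ) → ℝ := fun a b => ∑ y, (a y - b y) ^ 2 / ν y with hD
  have hD0 : ∀ a b, 0 ≤ D a b := fun a b =>
    Finset.sum_nonneg fun y _ => div_nonneg (sq_nonneg _) (hν y).le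
  -- per-step inequality
  have key : ∀ t ∈ Finset.Icc 1 T,
      (∑ y, l t y * (μ y - p t y)) + lam * D (p (t + 1)) ν
        ≤ lam * D μ ν + (1 / η) * (D μ (p t) - D μ (p (t + 1))) + η * B ^ 2 / 4 := by
    intro t ht
    obtain ⟨ht1, ht2⟩ := Finset.mem_Icc.mp ht
    obtain ⟨hxpos, hxsum⟩ := hsimplex (t + 1) (Finset.mem_Icc.mpr ⟨by omega, by omega⟩)
    obtain ⟨hπpos, hπsum⟩ := hsimplex t (Finset.mem_Icc.mpr ⟨by omega, by omega⟩)
    set x : Y → ℝ := p (t + 1) with hx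
    set π : Y → ℝ := p t with hπ
    set d : Y → ℝ := fun y => μ y - x y with hd
    have hdsum : ∑ y, d y = 0 := by
      simp only [hd, Finset.sum_sub_distrib, hμsum, hxsum, sub_self]
    -- expansion of the objective along x + s d
    have hlin : ∀ s : ℝ, ∑ y, l t y * (x y + s * d y)
        = (∑ y, l t y * x y) + s * ∑ y, l t y * d y := by
      intro s
      rw [Finset.mul_sum, ← Finset.sum_add_distrib]
      exact Finset.sum_congr rfl fun y _ => by ring
    have hquadexp : ∀ (b : Y → ℝ) (s : ℝ), ∑ y, (x y + s * d y - b y) ^ 2 / ν y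
        = (∑ y, (x y - b y) ^ 2 / ν y) + s * (∑ y, 2 * (x y - b y) * d y / ν y)
          + s ^ 2 * (∑ y, d y ^ 2 / ν y) := by
      intro b s
      rw [Finset.mul_sum, Finset.mul_sum, ← Finset.sum_add_distrib, ← Finset.sum_add_distrib]
      exact Finset.sum_congr rfl fun y _ => expand_pt_aux (ν y) (x y) (b y) (d y) s
    -- abbreviations
    set L : ℝ := ∑ y, l t y * d y with hL
    set G1 : ℝ := ∑ y, 2 * (x y - ν y) * d y / ν y with hG1
    set G2 : ℝ := ∑ y, 2 * (x y - π y) * d y / ν y with hG2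
    set Q : ℝ := ∑ y, d y ^ 2 / ν y with hQ
    have hQ0 : 0 ≤ Q := Finset.sum_nonneg fun y _ => div_nonneg (sq_nonneg _) (hν y).le
    have hA0 : 0 ≤ (lam + 1 / η) * Q := mul_nonneg (by positivity) hQ0
    have hg : 0 ≤ -L + lam * G1 + (1 / η) * G2 := by
      apply quad_min_aux hA0
      intro s hs0 hs1
      have hqpos : ∀ y, 0 ≤ x y + s * d y := by
        intro y
        have : x y + s * d y = (1 - s) * x y + s * μ y := by simp only [hd]; ring
        rw [this]
        exact add_nonneg (mul_nonneg (by linarith) (hxpos y)) (mul_nonneg hs0.le (hμ y))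
      have hqsum : ∑ y, (x y + s * d y) = 1 := by
        rw [Finset.sum_add_distrib, hxsum, ← Finset.mul_sum, hdsum, mul_zero, add_zero]
      have h := hupdate t ht (fun y => x y + s * d y) hqpos hqsum
      simp only [hlin, hquadexp] at h
      nlinarith [h]
    -- Pythagorean inequality at s = 1
    have hpyth : (-∑ y, l t y * x y) + lam * D x ν + (1 / η) * D x π + (lam + 1 / η) * Q
        ≤ (-∑ y, l t y * μ y) + lam * D μ ν + (1 / η) * D μ π := by
      have e1 : ∑ y, l t y * μ y = (∑ y, l t y * x y) + 1 * L := by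
        rw [← hlin 1]
        exact Finset.sum_congr rfl fun y _ => by simp only [hd]; ring
      have e2 : ∀ b : Y → ℝ, D μ b = D x b + 1 * (∑ y, 2 * (x y - b y) * d y / ν y)
          + 1 ^ 2 * Q := by
        intro b
        rw [hD, hQ, ← hquadexp b 1]
        exact Finset.sum_congr rfl fun y _ => by simp only [hd]; ring
      have e3 : lam * D μ ν = lam * D x ν + lam * G1 + lam * Q := by
        rw [e2 ν, hG1]; ring
      have e4 : (1 / η) * D μ π = (1 / η) * D x π + (1 / η) * G2 + (1 / η) * Q := by
        rw [e2 π, hG2]; ring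
      linarith [hg, e1, e3, e4]
    -- AM-GM step bound
    have amgm : ∑ y, l t y * (x y - π y) ≤ (1 / η) * D x π + η * B ^ 2 / 4 := by
      have hptw : ∀ y, l t y * (x y - π y)
          ≤ (1 / η) * ((x y - π y) ^ 2 / ν y) + η * B ^ 2 / 4 * ν y := fun y =>
        amgm_pt_aux η (ν y) (l t y) B (x y - π y) hη (hν y) (hl t ht y).1 (hl t ht y).2
      calc ∑ y, l t y * (x y - π y)
          ≤ ∑ y, ((1 / η) * ((x y - π y) ^ 2 / ν y) + η * B ^ 2 / 4 * ν y) :=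
            Finset.sum_le_sum fun y _ => hptw y
        _ = (1 / η) * D x π + η * B ^ 2 / 4 := by
            rw [Finset.sum_add_distrib, ← Finset.mul_sum, ← Finset.mul_sum, hνsum, mul_one, hD]
    -- combine
    have esplit1 : ∑ y, l t y * (μ y - π y) = (∑ y, l t y * μ y) - ∑ y, l t y * π y := by
      rw [← Finset.sum_sub_distrib]; exact Finset.sum_congr rfl fun y _ => by ring
    have esplit2 : ∑ y, l t y * (x y - π y) = (∑ y, l t y * x y) - ∑ y, l t y * π y := by
      rw [← Finset.sum_sub_distrib]; exact Finset.sum_congr rfl fun y _ => by ring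
    have hDμx : 0 ≤ D μ x := hD0 μ x
    have hDxQ : D μ x = Q := by
      rw [hD, hQ]
    have hQ1 : (1 / η) * D μ x = (1 / η) * Q := by rw [hDxQ]
    have hQ2 : 0 ≤ lam * Q := mul_nonneg hlam.le hQ0
    simp only [hπ] at esplit1 esplit2 amgm ⊢
    linarith [hpyth, amgm, esplit1, esplit2, hQ1, hQ2]
  -- sum over t, telescoping
  set e : ℕ → ℝ := fun t => D μ (p t) with he
  set c : ℕ → ℝ := fun t => D (p t) ν with hc
  have hsum := Finset.sum_le_sum key
  have hc1 : c 1 = 0 := by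
    simp only [hc, hp1, hD, sub_self]
    simp
  have he1 : e 1 = D μ ν := by simp [he, hp1]
  -- rewrite sums over Icc as sums over range
  have hIcc : ∀ (n : ℕ) (f : ℕ → ℝ), ∑ t ∈ Finset.Icc 1 n, f t = ∑ i ∈ Finset.range n, f (1 + i) := by
    intro n f
    rw [← Finset.Ico_add_one_right_eq_Icc, Finset.sum_Ico_eq_sum_range]
    simp
  -- LHS of summed inequality
  have hLHS : ∑ t ∈ Finset.Icc 1 T, ((∑ y, l t y * (μ y - p t y)) + lam * c (t + 1))
      = (∑ t ∈ Finset.Icc 1 T, ∑ y, l t y * (μ y - p t y))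
        + lam * ∑ t ∈ Finset.Icc 1 (T + 1), c t := by
    rw [Finset.sum_add_distrib, ← Finset.mul_sum]
    congr 1
    congr 1
    rw [hIcc (T + 1) c, hIcc T (fun t => c (t + 1)), Finset.sum_range_succ']
    simp only [hc1]
    rw [add_zero]
    exact (Finset.sum_congr rfl fun i _ => by ring_nf)
  -- RHS telescoping
  have hRHS : ∑ t ∈ Finset.Icc 1 T,
      (lam * D μ ν + (1 / η) * (e t - e (t + 1)) + η * B ^ 2 / 4)
      = (T : ℝ) * (lam * D μ ν) + (1 / η) * (e 1 - e (T + 1)) + (T : ℝ) * (η * B ^ 2 / 4) := by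
    rw [Finset.sum_add_distrib, Finset.sum_add_distrib, Finset.sum_const, Finset.sum_const,
      ← Finset.mul_sum]
    have hcard : (Finset.Icc 1 T).card = T := by simp
    rw [hcard]
    congr 1
    · congr 1
      · simp [nsmul_eq_mul]
      · congr 1
        rw [hIcc T (fun t => e t - e (t + 1))]
        have : ∀ i ∈ Finset.range T, e (1 + i) - e (1 + i + 1) = e (1 + i) - e (1 + (i + 1)) := by
          intro i _; ring_nf
        rw [Finset.sum_congr rfl this, Finset.sum_range_sub' (fun i => e (1 + i)) T]
        ring_nf
    · simp [nsmul_eq_mul]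
  rw [hLHS, hRHS] at hsum
  have heT : 0 ≤ e (T + 1) := hD0 μ (p (T + 1))
  have := hsum
  rw [he1] at this
  calc (∑ t ∈ Finset.Icc 1 T, ∑ y, l t y * (μ y - p t y))
        + lam * ∑ t ∈ Finset.Icc 1 (T + 1), ∑ y, (p t y - ν y) ^ 2 / ν y
      = (∑ t ∈ Finset.Icc 1 T, ∑ y, l t y * (μ y - p t y))
        + lam * ∑ t ∈ Finset.Icc 1 (T + 1), c t := by rw [hc]
    _ ≤ (T : ℝ) * (lam * D μ ν) + (1 / η) * (D μ ν - e (T + 1)) + (T : ℝ) * (η * B ^ 2 / 4) :=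
        this
    _ ≤ ((T : ℝ) * lam + 1 / η) * D μ ν + η * (T : ℝ) * B ^ 2 / 4 := by
        have h1η : 0 ≤ 1 / η := by positivity
        nlinarith [mul_nonneg h1η heT]
    _ = ((T : ℝ) * lam + 1 / η) * (∑ y, (μ y - ν y) ^ 2 / ν y) + η * T * B ^ 2 / 4 := by
        rw [hD]
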